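/- arXiv:2011.03764 — 2 statements merged into one kernel-verified Lean document; each statement's English description precedes it below -/
import Mathlib

section
/- Let μ₁, μ₂ ∈ ℂ and let M = ℂ[x, x⁻¹, y, y⁻¹] be the Laurent polynomial ring in two variables. Define ℂ-linear operators D₁, D₂ : M → M by D₁(xᵐyⁿ) = (m + μ₁)·xᵐ⁻¹yⁿ and D₂(xᵐyⁿ) = (n + μ₂)·xᵐyⁿ⁻¹. Then every nonzero ℂ-subspace of M stable under multiplication by x, multiplication by y, and under D₁ and D₂ equals M if and only if μ₁ ∉ ℤ and μ₂ ∉ ℤ. -/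
open AddMonoidAlgebra

private abbrev AMA := AddMonoidAlgebra ℂ (ℤ × ℤ)

private lemma Dsingle1 (D : AMA →ₗ[ℂ] AMA) (μ : ℂ)
    (hD : ∀ m n : ℤ, D (single (m, n) 1) = ((m : ℂ) + μ) • single (m - 1, n) 1)
    (a : ℤ × ℤ) (r : ℂ) :
    D (single a r) = single (a.1 - 1, a.2) (r * ((a.1 : ℂ) + μ)) := by
  have h1 : (single a r : AMA) = r • single a 1 := by rw [smul_single', mul_one]
  rw [h1, map_smul, show a = (a.1, a.2) from rfl, hD a.1 a.2, smul_smul, smul_single', mul_one]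

private lemma Dsingle2 (D : AMA →ₗ[ℂ] AMA) (μ : ℂ)
    (hD : ∀ m n : ℤ, D (single (m, n) 1) = ((n : ℂ) + μ) • single (m, n - 1) 1)
    (a : ℤ × ℤ) (r : ℂ) :
    D (single a r) = single (a.1, a.2 - 1) (r * ((a.2 : ℂ) + μ)) := by
  have h1 : (single a r : AMA) = r • single a 1 := by rw [smul_single', mul_one]
  rw [h1, map_smul, show a = (a.1, a.2) from rfl, hD a.1 a.2, smul_smul, smul_single', mul_one]

private lemma Dapply1 (D : AMA →ₗ[ℂ] AMA) (μ : ℂ)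
    (hD : ∀ m n : ℤ, D (single (m, n) 1) = ((m : ℂ) + μ) • single (m - 1, n) 1)
    (p : AMA) (c : ℤ × ℤ) :
    (D p).coeff c = (((c.1 + 1 : ℤ) : ℂ) + μ) * p.coeff (c.1 + 1, c.2) := by
  induction p using AddMonoidAlgebra.induction_linear with
  | zero => simp
  | add f g hf hg =>
    rw [map_add, AddMonoidAlgebra.coeff_add, AddMonoidAlgebra.coeff_add, Finsupp.add_apply, Finsupp.add_apply, hf, hg]; ring
  | single a r =>
    rw [Dsingle1 D μ hD a r]
    rw [AddMonoidAlgebra.coeff_single_apply, AddMonoidAlgebra.coeff_single_apply]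
    by_cases h : a = (c.1 + 1, c.2)
    · rw [if_pos (by rw [h]; exact Prod.ext (by simp) rfl), if_pos h]
      subst h; push_cast; ring
    · rw [if_neg (fun hc => h (Prod.ext
        (by have := congrArg Prod.fst hc; simp at this; omega)
        (by have := congrArg Prod.snd hc; simpa using this))), if_neg h, mul_zero]

private lemma Dapply2 (D : AMA →ₗ[ℂ] AMA) (μ : ℂ)
    (hD : ∀ m n : ℤ, D (single (m, n) 1) = ((n : ℂ) + μ) • single (m, n - 1) 1)
    (p : AMA) (c : ℤ × ℤ) :
    (D p).coeff c = (((c.2 + 1 : ℤ) : ℂ) + μ) * p.coeff (c.1, c.2 + 1) := by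
  induction p using AddMonoidAlgebra.induction_linear with
  | zero => simp
  | add f g hf hg =>
    rw [map_add, AddMonoidAlgebra.coeff_add, AddMonoidAlgebra.coeff_add, Finsupp.add_apply, Finsupp.add_apply, hf, hg]; ring
  | single a r =>
    rw [Dsingle2 D μ hD a r]
    rw [AddMonoidAlgebra.coeff_single_apply, AddMonoidAlgebra.coeff_single_apply]
    by_cases h : a = (c.1, c.2 + 1)
    · rw [if_pos (by rw [h]; exact Prod.ext rfl (by simp)), if_pos h]
      subst h; push_cast; ring
    · rw [if_neg (fun hc => h (Prod.ext
        (by have := congrArg Prod.fst hc; simpa using this)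
        (by have := congrArg Prod.snd hc; simp at this; omega))), if_neg h, mul_zero]

-- coefficient of x * D₁ p
private lemma Eapply1 (D : AMA →ₗ[ℂ] AMA) (μ : ℂ)
    (hD : ∀ m n : ℤ, D (single (m, n) 1) = ((m : ℂ) + μ) • single (m - 1, n) 1)
    (p : AMA) (c : ℤ × ℤ) :
    (single ((1 : ℤ), (0 : ℤ)) (1 : ℂ) * D p).coeff c = ((c.1 : ℂ) + μ) * p.coeff c := by
  rw [AddMonoidAlgebra.coeff_single_mul_apply, Dapply1 D μ hD]
  have h1 : ((-((1:ℤ),(0:ℤ)) + c).1 + 1 = c.1) := by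
    simp [Prod.fst]
  have h2 : ((-((1:ℤ),(0:ℤ)) + c).2 = c.2) := by simp [Prod.snd]
  rw [h1, h2, one_mul]

private lemma Eapply2 (D : AMA →ₗ[ℂ] AMA) (μ : ℂ)
    (hD : ∀ m n : ℤ, D (single (m, n) 1) = ((n : ℂ) + μ) • single (m, n - 1) 1)
    (p : AMA) (c : ℤ × ℤ) :
    (single ((0 : ℤ), (1 : ℤ)) (1 : ℂ) * D p).coeff c = ((c.2 : ℂ) + μ) * p.coeff c := by
  rw [AddMonoidAlgebra.coeff_single_mul_apply, Dapply2 D μ hD]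
  have h1 : ((-((0:ℤ),(1:ℤ)) + c).2 + 1 = c.2) := by simp [Prod.snd]
  have h2 : ((-((0:ℤ),(1:ℤ)) + c).1 = c.1) := by simp [Prod.fst]
  rw [h1, h2, one_mul]
open AddMonoidAlgebra

private lemma reach_single (μ₁ μ₂ : ℂ)
    (D₁ D₂ : AMA →ₗ[ℂ] AMA)
    (hD₁ : ∀ m n : ℤ, D₁ (single (m, n) 1) = ((m : ℂ) + μ₁) • single (m - 1, n) 1)
    (hD₂ : ∀ m n : ℤ, D₂ (single (m, n) 1) = ((n : ℂ) + μ₂) • single (m, n - 1) 1)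
    (N : Submodule ℂ AMA)
    (hx : ∀ p ∈ N, single ((1 : ℤ), (0 : ℤ)) (1 : ℂ) * p ∈ N)
    (hy : ∀ p ∈ N, single ((0 : ℤ), (1 : ℤ)) (1 : ℂ) * p ∈ N)
    (hd1 : ∀ p ∈ N, D₁ p ∈ N) (hd2 : ∀ p ∈ N, D₂ p ∈ N)
    (k : ℕ) :
    ∀ p ∈ N, p ≠ 0 → p.coeff.support.card ≤ k → ∃ a : ℤ × ℤ, single a (1 : ℂ) ∈ N := by
  induction k with
  | zero =>
    intro p hp hne hcard
    exact absurd (AddMonoidAlgebra.coeff_eq_zero.mp (Finsupp.support_eq_empty.mp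
      (Finset.card_eq_zero.mp (Nat.le_zero.mp hcard)))) hne
  | succ k ih =>
    intro p hp hne hcard
    by_cases hsplit : ∃ a ∈ p.coeff.support, ∃ b ∈ p.coeff.support, a ≠ b
    · obtain ⟨a, ha, b, hb, hab⟩ := hsplit
      have hcases : a.1 ≠ b.1 ∨ a.2 ≠ b.2 := by
        by_contra hcon
        push_neg at hcon
        exact hab (Prod.ext hcon.1 hcon.2)
      rcases hcases with h1 | h2
      · -- use E₁
        set q : AMA := single ((1:ℤ),(0:ℤ)) (1:ℂ) * D₁ p - (((b.1 : ℂ)) + μ₁) • p with hq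
        have hqN : q ∈ N := sub_mem (hx _ (hd1 p hp)) (Submodule.smul_mem N _ hp)
        have hqc : ∀ c : ℤ × ℤ, q.coeff c = ((c.1 : ℂ) - (b.1 : ℂ)) * p.coeff c := by
          intro c
          rw [hq, AddMonoidAlgebra.coeff_sub, Finsupp.sub_apply, AddMonoidAlgebra.coeff_smul_apply, Eapply1 D₁ μ₁ hD₁,
            smul_eq_mul]
          ring
        have hqa : q.coeff a ≠ 0 := by
          rw [hqc]
          refine mul_ne_zero ?_ (Finsupp.mem_support_iff.mp ha)
          intro hc
          apply h1
          exact_mod_cast sub_eq_zero.mp hc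
        have hqne : q ≠ 0 := fun h => hqa (by rw [h]; rfl)
        have hsub : q.coeff.support ⊆ p.coeff.support.erase b := by
          intro c hc
          have hcne := Finsupp.mem_support_iff.mp hc
          rw [hqc] at hcne
          refine Finset.mem_erase.mpr ⟨?_, Finsupp.mem_support_iff.mpr
            fun h => hcne (by rw [h, mul_zero])⟩
          intro hcb
          subst hcb
          exact hcne (by rw [sub_self, zero_mul])
        have hcard' : q.coeff.support.card ≤ k := by
          calc q.coeff.support.card ≤ (p.coeff.support.erase b).card := Finset.card_le_card hsub
            _ = p.coeff.support.card - 1 := Finset.card_erase_of_mem hb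
            _ ≤ k := by omega
        exact ih q hqN hqne hcard'
      · -- use E₂
        set q : AMA := single ((0:ℤ),(1:ℤ)) (1:ℂ) * D₂ p - (((b.2 : ℂ)) + μ₂) • p with hq
        have hqN : q ∈ N := sub_mem (hy _ (hd2 p hp)) (Submodule.smul_mem N _ hp)
        have hqc : ∀ c : ℤ × ℤ, q.coeff c = ((c.2 : ℂ) - (b.2 : ℂ)) * p.coeff c := by
          intro c
          rw [hq, AddMonoidAlgebra.coeff_sub, Finsupp.sub_apply, AddMonoidAlgebra.coeff_smul_apply, Eapply2 D₂ μ₂ hD₂,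
            smul_eq_mul]
          ring
        have hqa : q.coeff a ≠ 0 := by
          rw [hqc]
          refine mul_ne_zero ?_ (Finsupp.mem_support_iff.mp ha)
          intro hc
          apply h2
          exact_mod_cast sub_eq_zero.mp hc
        have hqne : q ≠ 0 := fun h => hqa (by rw [h]; rfl)
        have hsub : q.coeff.support ⊆ p.coeff.support.erase b := by
          intro c hc
          have hcne := Finsupp.mem_support_iff.mp hc
          rw [hqc] at hcne
          refine Finset.mem_erase.mpr ⟨?_, Finsupp.mem_support_iff.mpr
            fun h => hcne (by rw [h, mul_zero])⟩
          intro hcb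
          subst hcb
          exact hcne (by rw [sub_self, zero_mul])
        have hcard' : q.coeff.support.card ≤ k := by
          calc q.coeff.support.card ≤ (p.coeff.support.erase b).card := Finset.card_le_card hsub
            _ = p.coeff.support.card - 1 := Finset.card_erase_of_mem hb
            _ ≤ k := by omega
        exact ih q hqN hqne hcard'
    · push_neg at hsplit
      obtain ⟨a, ha⟩ := Finsupp.support_nonempty_iff.mpr (AddMonoidAlgebra.coeff_eq_zero.not.mpr hne)
      have hps : p = single a (p.coeff a) := by
        ext c
        rw [AddMonoidAlgebra.coeff_single_apply]
        by_cases h : a = c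
        · rw [if_pos h, h]
        · rw [if_neg h]
          by_contra hc
          exact h (hsplit a ha c (Finsupp.mem_support_iff.mpr hc))
      refine ⟨a, ?_⟩
      obtain ⟨r, hr0, hps⟩ : ∃ r : ℂ, r ≠ 0 ∧ p = single a r :=
        ⟨p.coeff a, Finsupp.mem_support_iff.mp ha, hps⟩
      have : r⁻¹ • p ∈ N := Submodule.smul_mem N _ hp
      rwa [hps, smul_single', inv_mul_cancel₀ hr0] at this

private lemma singles_all (μ₁ μ₂ : ℂ)
    (hμ₁ : ¬∃ k : ℤ, μ₁ = (k : ℂ)) (hμ₂ : ¬∃ k : ℤ, μ₂ = (k : ℂ))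
    (D₁ D₂ : AMA →ₗ[ℂ] AMA)
    (hD₁ : ∀ m n : ℤ, D₁ (single (m, n) 1) = ((m : ℂ) + μ₁) • single (m - 1, n) 1)
    (hD₂ : ∀ m n : ℤ, D₂ (single (m, n) 1) = ((n : ℂ) + μ₂) • single (m, n - 1) 1)
    (N : Submodule ℂ AMA)
    (hx : ∀ p ∈ N, single ((1 : ℤ), (0 : ℤ)) (1 : ℂ) * p ∈ N)
    (hy : ∀ p ∈ N, single ((0 : ℤ), (1 : ℤ)) (1 : ℂ) * p ∈ N)
    (hd1 : ∀ p ∈ N, D₁ p ∈ N) (hd2 : ∀ p ∈ N, D₂ p ∈ N)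
    (a : ℤ × ℤ) (haN : single a (1 : ℂ) ∈ N) :
    ∀ c : ℤ × ℤ, single c (1 : ℂ) ∈ N := by
  have hup1 : ∀ m n : ℤ, single (m, n) (1 : ℂ) ∈ N → single (m + 1, n) (1 : ℂ) ∈ N := by
    intro m n h
    have := hx _ h
    rwa [single_mul_single, one_mul, show ((1 : ℤ), (0 : ℤ)) + (m, n) = (m + 1, n) from
      Prod.ext (by simp; omega) (by simp)] at this
  have hup2 : ∀ m n : ℤ, single (m, n) (1 : ℂ) ∈ N → single (m, n + 1) (1 : ℂ) ∈ N := by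
    intro m n h
    have := hy _ h
    rwa [single_mul_single, one_mul, show ((0 : ℤ), (1 : ℤ)) + (m, n) = (m, n + 1) from
      Prod.ext (by simp) (by simp; omega)] at this
  have hdown1 : ∀ m n : ℤ, single (m, n) (1 : ℂ) ∈ N → single (m - 1, n) (1 : ℂ) ∈ N := by
    intro m n h
    have hm : ((m : ℂ) + μ₁) ≠ 0 := by
      intro hc
      exact hμ₁ ⟨-m, by push_cast; linear_combination hc⟩
    have h1 := hd1 _ h
    rw [hD₁ m n] at h1
    have := Submodule.smul_mem N ((m : ℂ) + μ₁)⁻¹ h1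
    rwa [smul_smul, inv_mul_cancel₀ hm, one_smul] at this
  have hdown2 : ∀ m n : ℤ, single (m, n) (1 : ℂ) ∈ N → single (m, n - 1) (1 : ℂ) ∈ N := by
    intro m n h
    have hm : ((n : ℂ) + μ₂) ≠ 0 := by
      intro hc
      exact hμ₂ ⟨-n, by push_cast; linear_combination hc⟩
    have h2 := hd2 _ h
    rw [hD₂ m n] at h2
    have := Submodule.smul_mem N ((n : ℂ) + μ₂)⁻¹ h2
    rwa [smul_smul, inv_mul_cancel₀ hm, one_smul] at this
  have hrow : ∀ m : ℤ, single (m, a.2) (1 : ℂ) ∈ N := by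
    have key : ∀ d : ℤ, single (a.1 + d, a.2) (1 : ℂ) ∈ N := by
      intro d
      induction d using Int.induction_on with
      | zero => simpa using haN
      | succ i hi =>
        have := hup1 _ _ hi
        rwa [show (a.1 + (i : ℤ) + 1 : ℤ) = a.1 + ((i : ℤ) + 1) by ring] at this
      | pred i hi =>
        have := hdown1 _ _ hi
        rwa [show (a.1 + (-(i : ℤ)) - 1 : ℤ) = a.1 + (-(i : ℤ) - 1) by ring] at this
    intro m
    have := key (m - a.1)
    rwa [show a.1 + (m - a.1) = m by ring] at this
  intro c
  have key : ∀ d : ℤ, single (c.1, a.2 + d) (1 : ℂ) ∈ N := by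
    intro d
    induction d using Int.induction_on with
    | zero => simpa using hrow c.1
    | succ i hi =>
      have := hup2 _ _ hi
      rwa [show (a.2 + (i : ℤ) + 1 : ℤ) = a.2 + ((i : ℤ) + 1) by ring] at this
    | pred i hi =>
      have := hdown2 _ _ hi
      rwa [show (a.2 + (-(i : ℤ)) - 1 : ℤ) = a.2 + (-(i : ℤ) - 1) by ring] at this
  have := key (c.2 - a.2)
  rwa [show a.2 + (c.2 - a.2) = c.2 by ring, show (c.1, c.2) = c from rfl] at this

open AddMonoidAlgebra in
/-- Simplicity criterion in two variables: on the Laurent polynomial ring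
`M = ℂ[x,x⁻¹,y,y⁻¹]` (modeled as the monoid algebra of `ℤ × ℤ`), with twisted derivatives
`D₁(xᵐyⁿ) = (m+μ₁)xᵐ⁻¹yⁿ` and `D₂(xᵐyⁿ) = (n+μ₂)xᵐyⁿ⁻¹`, every nonzero subspace stable
under multiplication by `x`, multiplication by `y`, `D₁` and `D₂` equals `M` iff
`μ₁ ∉ ℤ` and `μ₂ ∉ ℤ`. -/
theorem stmt_11 (μ₁ μ₂ : ℂ)
    (D₁ D₂ : AddMonoidAlgebra ℂ (ℤ × ℤ) →ₗ[ℂ] AddMonoidAlgebra ℂ (ℤ × ℤ))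
    (hD₁ : ∀ m n : ℤ, D₁ (single (m, n) 1) = ((m : ℂ) + μ₁) • single (m - 1, n) 1)
    (hD₂ : ∀ m n : ℤ, D₂ (single (m, n) 1) = ((n : ℂ) + μ₂) • single (m, n - 1) 1) :
    (∀ N : Submodule ℂ (AddMonoidAlgebra ℂ (ℤ × ℤ)), N ≠ ⊥ →
        (∀ p ∈ N, single ((1 : ℤ), (0 : ℤ)) (1 : ℂ) * p ∈ N) →
        (∀ p ∈ N, single ((0 : ℤ), (1 : ℤ)) (1 : ℂ) * p ∈ N) →
        (∀ p ∈ N, D₁ p ∈ N) → (∀ p ∈ N, D₂ p ∈ N) → N = ⊤) ↔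
      (¬∃ k : ℤ, μ₁ = (k : ℂ)) ∧ ¬∃ k : ℤ, μ₂ = (k : ℂ) := by
  constructor
  · intro h
    constructor
    · rintro ⟨k, hk⟩
      set N₁ : Submodule ℂ AMA :=
        { carrier := {p : AMA | ∀ c : ℤ × ℤ, c.1 < -k → p.coeff c = 0}
          add_mem' := fun {p q} hp hq c hc => by
            rw [AddMonoidAlgebra.coeff_add, Finsupp.add_apply, hp c hc, hq c hc, add_zero]
          zero_mem' := fun c _ => rfl
          smul_mem' := fun r p hp c hc => by
            rw [AddMonoidAlgebra.coeff_smul_apply, hp c hc, smul_zero] } with hN₁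
      have hmem : ∀ p : AMA, p ∈ N₁ ↔ ∀ c : ℤ × ℤ, c.1 < -k → p.coeff c = 0 := fun p => Iff.rfl
      have hne : N₁ ≠ ⊥ := by
        rw [Submodule.ne_bot_iff]
        refine ⟨single (-k, 0) 1, ?_, ?_⟩
        · rw [hmem]
          intro c hc
          rw [AddMonoidAlgebra.coeff_single_apply, if_neg (fun hcc => by
            have := congrArg Prod.fst hcc; simp at this; omega)]
        · exact fun h0 => one_ne_zero (AddMonoidAlgebra.single_eq_zero.mp h0)
      have hx : ∀ p ∈ N₁, single ((1 : ℤ), (0 : ℤ)) (1 : ℂ) * p ∈ N₁ := by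
        intro p hp c hc
        rw [AddMonoidAlgebra.coeff_single_mul_apply, one_mul]
        exact hp _ (by simp; omega)
      have hy : ∀ p ∈ N₁, single ((0 : ℤ), (1 : ℤ)) (1 : ℂ) * p ∈ N₁ := by
        intro p hp c hc
        rw [AddMonoidAlgebra.coeff_single_mul_apply, one_mul]
        exact hp _ (by simp; omega)
      have hd1 : ∀ p ∈ N₁, D₁ p ∈ N₁ := by
        intro p hp c hc
        rw [Dapply1 D₁ μ₁ hD₁]
        by_cases hcc : c.1 + 1 < -k
        · rw [hp _ hcc, mul_zero]
        · have : c.1 + 1 = -k := by omega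
          rw [this, hk]
          push_cast
          ring_nf
      have hd2 : ∀ p ∈ N₁, D₂ p ∈ N₁ := by
        intro p hp c hc
        rw [Dapply2 D₂ μ₂ hD₂]
        exact mul_eq_zero_of_right _ (hp (c.1, c.2 + 1) hc)
      have htop := h N₁ hne hx hy hd1 hd2
      have : single ((-k - 1 : ℤ), (0 : ℤ)) (1 : ℂ) ∈ N₁ := htop ▸ Submodule.mem_top
      have h0 := this (-k - 1, 0) (by omega)
      rw [AddMonoidAlgebra.coeff_single_apply, if_pos rfl] at h0
      exact one_ne_zero h0
    · rintro ⟨k, hk⟩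
      set N₂ : Submodule ℂ AMA :=
        { carrier := {p : AMA | ∀ c : ℤ × ℤ, c.2 < -k → p.coeff c = 0}
          add_mem' := fun {p q} hp hq c hc => by
            rw [AddMonoidAlgebra.coeff_add, Finsupp.add_apply, hp c hc, hq c hc, add_zero]
          zero_mem' := fun c _ => rfl
          smul_mem' := fun r p hp c hc => by
            rw [AddMonoidAlgebra.coeff_smul_apply, hp c hc, smul_zero] } with hN₂
      have hmem : ∀ p : AMA, p ∈ N₂ ↔ ∀ c : ℤ × ℤ, c.2 < -k → p.coeff c = 0 := fun p => Iff.rfl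
      have hne : N₂ ≠ ⊥ := by
        rw [Submodule.ne_bot_iff]
        refine ⟨single (0, -k) 1, ?_, ?_⟩
        · rw [hmem]
          intro c hc
          rw [AddMonoidAlgebra.coeff_single_apply, if_neg (fun hcc => by
            have := congrArg Prod.snd hcc; simp at this; omega)]
        · exact fun h0 => one_ne_zero (AddMonoidAlgebra.single_eq_zero.mp h0)
      have hx : ∀ p ∈ N₂, single ((1 : ℤ), (0 : ℤ)) (1 : ℂ) * p ∈ N₂ := by
        intro p hp c hc
        rw [AddMonoidAlgebra.coeff_single_mul_apply, one_mul]
        exact hp _ (by simp; omega)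
      have hy : ∀ p ∈ N₂, single ((0 : ℤ), (1 : ℤ)) (1 : ℂ) * p ∈ N₂ := by
        intro p hp c hc
        rw [AddMonoidAlgebra.coeff_single_mul_apply, one_mul]
        exact hp _ (by simp; omega)
      have hd1 : ∀ p ∈ N₂, D₁ p ∈ N₂ := by
        intro p hp c hc
        rw [Dapply1 D₁ μ₁ hD₁]
        exact mul_eq_zero_of_right _ (hp (c.1 + 1, c.2) hc)
      have hd2 : ∀ p ∈ N₂, D₂ p ∈ N₂ := by
        intro p hp c hc
        rw [Dapply2 D₂ μ₂ hD₂]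
        by_cases hcc : c.2 + 1 < -k
        · rw [hp _ hcc, mul_zero]
        · have : c.2 + 1 = -k := by omega
          rw [this, hk]
          push_cast
          ring_nf
      have htop := h N₂ hne hx hy hd1 hd2
      have : single ((0 : ℤ), (-k - 1 : ℤ)) (1 : ℂ) ∈ N₂ := htop ▸ Submodule.mem_top
      have h0 := this (0, -k - 1) (by omega)
      rw [AddMonoidAlgebra.coeff_single_apply, if_pos rfl] at h0
      exact one_ne_zero h0
  · rintro ⟨hμ₁, hμ₂⟩ N hN hx hy hd1 hd2
    obtain ⟨p, hp, hpne⟩ := Submodule.ne_bot_iff N |>.mp hN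
    obtain ⟨a, haN⟩ := reach_single μ₁ μ₂ D₁ D₂ hD₁ hD₂ N hx hy hd1 hd2
      p.coeff.support.card p hp hpne le_rfl
    have hall := singles_all μ₁ μ₂ hμ₁ hμ₂ D₁ D₂ hD₁ hD₂ N hx hy hd1 hd2 a haN
    rw [Submodule.eq_top_iff']
    intro q
    have hq : q = q.coeff.sum (fun c r => single c r) := (AddMonoidAlgebra.sum_coeff_single q).symm
    rw [hq]
    refine Submodule.sum_mem N ?_
    intro c hc
    show (single c (q.coeff c) : AMA) ∈ N
    rw [show (single c (q.coeff c) : AMA) = (q.coeff c) • single c 1 from by rw [smul_single', mul_one]]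
    exact Submodule.smul_mem N _ (hall c)
end

section
/- Let μ ∈ ℂ, M = ℂ[x, x⁻¹], and D_μ : M → M the ℂ-linear operator with D_μ(xⁿ) = (n + μ)·xⁿ⁻¹. Let N be the smallest ℂ-subspace of M containing the constant 1 and stable under multiplication by x and under D_μ. Then N = M if and only if μ is not a nonnegative integer. -/
open LaurentPolynomial in
/-- For the twisted derivative `D_μ` on `ℂ[x, x⁻¹]`, the smallest subspace containing `1`
and stable under multiplication by `x` and under `D_μ` is the whole space iff `μ` is not a
nonnegative integer. -/
theorem stmt_12 (μ : ℂ) (D : LaurentPolynomial ℂ →ₗ[ℂ] LaurentPolynomial ℂ)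
    (hD : ∀ n : ℤ, D (T n) = ((n : ℂ) + μ) • T (n - 1))
    (N : Submodule ℂ (LaurentPolynomial ℂ))
    (h1 : (1 : LaurentPolynomial ℂ) ∈ N)
    (hx : ∀ p ∈ N, T 1 * p ∈ N) (hDN : ∀ p ∈ N, D p ∈ N)
    (hmin : ∀ N' : Submodule ℂ (LaurentPolynomial ℂ),
      (1 : LaurentPolynomial ℂ) ∈ N' → (∀ p ∈ N', T 1 * p ∈ N') →
      (∀ p ∈ N', D p ∈ N') → N ≤ N') :
    N = ⊤ ↔ ¬∃ k : ℕ, μ = (k : ℂ) := by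
  constructor
  · rintro hN ⟨k, rfl⟩
    -- the span of T n for n ≥ -k is a proper stable subspace
    set S : Set (LaurentPolynomial ℂ) := {p | ∃ n : ℤ, -(k : ℤ) ≤ n ∧ p = T n} with hS
    set N' : Submodule ℂ (LaurentPolynomial ℂ) := Submodule.span ℂ S with hN'
    have hTmem : ∀ n : ℤ, -(k : ℤ) ≤ n → T n ∈ N' := fun n hn =>
      Submodule.subset_span ⟨n, hn, rfl⟩
    have h1' : (1 : LaurentPolynomial ℂ) ∈ N' := by
      simpa [← T_zero] using hTmem 0 (by omega)
    have hx' : ∀ p ∈ N', T 1 * p ∈ N' := by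
      intro p hp
      induction hp using Submodule.span_induction with
      | mem q hq =>
        obtain ⟨n, hn, rfl⟩ := hq
        rw [← T_add]
        exact hTmem _ (by omega)
      | zero => simp
      | add q r _ _ hq hr => rw [mul_add]; exact N'.add_mem hq hr
      | smul c q _ hq => rw [mul_smul_comm]; exact N'.smul_mem c hq
    have hD' : ∀ p ∈ N', D p ∈ N' := by
      intro p hp
      induction hp using Submodule.span_induction with
      | mem q hq =>
        obtain ⟨n, hn, rfl⟩ := hq
        rw [hD]
        rcases eq_or_lt_of_le hn with h | h
        · have : ((n : ℂ) + (k : ℂ)) = 0 := by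
            rw [← h]; push_cast; ring
          rw [this, zero_smul]; exact N'.zero_mem
        · exact N'.smul_mem _ (hTmem _ (by omega))
      | zero => simp
      | add q r _ _ hq hr => rw [map_add]; exact N'.add_mem hq hr
      | smul c q _ hq => rw [map_smul]; exact N'.smul_mem c hq
    have hle := hmin N' h1' hx' hD'
    -- but T (-(k+1)) ∉ N'
    have hnot : T (-(k : ℤ) - 1) ∉ N' := by
      intro hmem
      have hker : N' ≤ LinearMap.ker ((Finsupp.lapply (M := ℂ) (-(k : ℤ) - 1)).comp
          (AddMonoidAlgebra.coeffLinearEquiv ℂ).toLinearMap) := by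
        rw [hN', Submodule.span_le]
        rintro q ⟨n, hn, rfl⟩
        simp only [SetLike.mem_coe, LinearMap.mem_ker, Finsupp.lapply_apply]
        show (T n : LaurentPolynomial ℂ).coeff (-(k : ℤ) - 1) = 0
        rw [T_apply]
        exact if_neg (by omega)
      have := hker hmem
      rw [LinearMap.mem_ker] at this
      change (T (-(k : ℤ) - 1) : LaurentPolynomial ℂ).coeff (-(k : ℤ) - 1) = 0 at this
      rw [T_apply, if_pos rfl] at this
      exact one_ne_zero (α := ℂ) this
    exact hnot (hle (hN ▸ Submodule.mem_top))
  · intro hμ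
    have hTn : ∀ n : ℤ, T n ∈ N := by
      intro n
      induction n using Int.induction_on with
      | zero => simpa [← T_zero] using h1
      | succ m ih =>
        have := hx _ ih
        rwa [← T_add, show (1 : ℤ) + m = m + 1 by ring] at this
      | pred m ih =>
        have hm : (((-(m : ℤ) : ℤ) : ℂ) + μ) ≠ 0 := by
          intro h
          apply hμ
          exact ⟨m, by push_cast at h; linear_combination h⟩
        have := hDN _ ih
        rw [hD] at this
        have := N.smul_mem (((-(m : ℤ) : ℤ) : ℂ) + μ)⁻¹ this
        rw [smul_smul, inv_mul_cancel₀ hm, one_smul] at this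
        convert this using 2
    rw [eq_top_iff]
    rintro p -
    induction p using LaurentPolynomial.induction_on' with
    | add q r hq hr => exact N.add_mem hq hr
    | C_mul_T n a =>
      have : C a * T n = a • T n := by
        rw [← single_eq_C_mul_T, LaurentPolynomial.T, AddMonoidAlgebra.smul_single, smul_eq_mul, mul_one]
      rw [this]
      exact N.smul_mem a (hTn n)
end
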